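/- Let P be a Hausdorff pospace, P' = ⨆_{n≥1} P^{[n]} the space of nonempty finite strict chains in P (P^{[n]} ⊆ P^n the subspace of strictly increasing n-tuples) ordered by the subchain relation, and P^Δ the set P' with the topology whose open sets are those open in P' and upward-closed for the subchain order. Then the map κ : |P| → P^Δ sending each point of the order complex to the chain spanning the minimal simplex containing it is continuous, where |P| carries the L_1 (Hartman–Mycielski) metric topology. -/

import Mathlib

open Classical MeasureTheory

/-- The space `P'` of nonempty finite strict chains in `P`: the disjoint union over `n` of
the subspaces `P^{[n+1]} ⊆ P^{n+1}` of strictly increasing tuples. -/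
abbrev ChainsOf (P : Type*) [TopologicalSpace P] [PartialOrder P] : Type _ :=
  Σ n : ℕ, {c : Fin (n + 1) → P // StrictMono c}

/-- The topology of `P^Δ`: a set of chains is `Δ`-open iff it is open in the disjoint-union
(product) topology of `P'` and upward closed for the subchain relation. -/
def IsOpenDelta {P : Type*} [TopologicalSpace P] [PartialOrder P]
    (U : Set (ChainsOf P)) : Prop :=
  IsOpen U ∧ ∀ c ∈ U, ∀ d : ChainsOf P,
    Set.range (c.2 : Fin (c.1 + 1) → P) ⊆ Set.range (d.2 : Fin (d.1 + 1) → P) → d ∈ U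

/-- The index of the step of the step function `[0,1) → P` associated to weights `lam`:
`stepIdx lam t = k` iff `t` lies in `[Σ_{i<k} λ_i, Σ_{i≤k} λ_i)`. -/
noncomputable def stepIdx {n : ℕ} (lam : Fin (n + 1) → ℝ) (t : ℝ) : Fin (n + 1) :=
  if h : ∃ k : Fin (n + 1),
      (∑ i ∈ Finset.univ.filter (fun i => i < k), lam i) ≤ t ∧
        t < ∑ i ∈ Finset.univ.filter (fun i => i ≤ k), lam i
  then h.choose else 0

/-- The `L_1` (Hartman–Mycielski) distance between the points of the order complex `|P|`
given by the chains `c`, `d` with weights `lam`, `mu`: the integral over `[0,1)` of the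
distance between the associated step functions. -/
noncomputable def L1dist {P : Type*} [MetricSpace P] {n m : ℕ}
    (c : Fin (n + 1) → P) (lam : Fin (n + 1) → ℝ)
    (d : Fin (m + 1) → P) (mu : Fin (m + 1) → ℝ) : ℝ :=
  ∫ t in Set.Ico (0 : ℝ) 1, dist (c (stepIdx lam t)) (d (stepIdx mu t))


section Aux
variable {n : ℕ} {lam : Fin (n + 1) → ℝ}

def lowS (lam : Fin (n + 1) → ℝ) (k : Fin (n + 1)) : ℝ :=
  ∑ i ∈ Finset.univ.filter (fun i => i < k), lam i

def highS (lam : Fin (n + 1) → ℝ) (k : Fin (n + 1)) : ℝ :=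
  ∑ i ∈ Finset.univ.filter (fun i => i ≤ k), lam i

lemma step_unique (hlam : ∀ i, 0 ≤ lam i) {t : ℝ} {k k' : Fin (n + 1)}
    (hk : lowS lam k ≤ t ∧ t < highS lam k) (hk' : lowS lam k' ≤ t ∧ t < highS lam k') :
    k = k' := by
  by_contra hne
  have key : ∀ a b : Fin (n+1), a < b → highS lam a ≤ lowS lam b := by
    intro a b hab
    apply Finset.sum_le_sum_of_subset_of_nonneg
    · intro i hi
      simp only [Finset.mem_filter, Finset.mem_univ, true_and] at hi ⊢
      exact lt_of_le_of_lt hi hab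
    · exact fun i _ _ => hlam i
  rcases lt_or_gt_of_ne hne with h | h
  · exact absurd ((hk.2.trans_le (key _ _ h)).trans_le hk'.1) (lt_irrefl t)
  · exact absurd ((hk'.2.trans_le (key _ _ h)).trans_le hk.1) (lt_irrefl t)

lemma stepIdx_eq (hlam : ∀ i, 0 ≤ lam i) {t : ℝ} {k : Fin (n + 1)}
    (h1 : lowS lam k ≤ t) (h2 : t < highS lam k) : stepIdx lam t = k := by
  have hex : ∃ k : Fin (n + 1),
      (∑ i ∈ Finset.univ.filter (fun i => i < k), lam i) ≤ t ∧
        t < ∑ i ∈ Finset.univ.filter (fun i => i ≤ k), lam i := ⟨k, h1, h2⟩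
  rw [stepIdx, dif_pos hex]
  exact step_unique hlam hex.choose_spec ⟨h1, h2⟩

lemma measurable_stepIdx (hlam : ∀ i, 0 ≤ lam i) : Measurable (stepIdx lam) := by
  apply measurable_to_countable'
  intro k
  have hIco : ∀ j : Fin (n+1), {t : ℝ | lowS lam j ≤ t ∧ t < highS lam j}
      = Set.Ico (lowS lam j) (highS lam j) := fun j => rfl
  by_cases hk : k = 0
  · subst hk
    have : stepIdx lam ⁻¹' {0} =
        Set.Ico (lowS lam 0) (highS lam 0) ∪ (⋃ j, Set.Ico (lowS lam j) (highS lam j))ᶜ := by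
      ext t
      simp only [Set.mem_preimage, Set.mem_singleton_iff, Set.mem_union, Set.mem_compl_iff,
        Set.mem_iUnion, Set.mem_Ico]
      constructor
      · intro h
        by_cases hex : ∃ j : Fin (n+1), lowS lam j ≤ t ∧ t < highS lam j
        · obtain ⟨j, hj⟩ := hex
          have := stepIdx_eq hlam hj.1 hj.2
          rw [h] at this
          left; rw [this]; exact hj
        · exact Or.inr hex
      · rintro (⟨h1, h2⟩ | h)
        · exact stepIdx_eq hlam h1 h2
        · exact dif_neg h
    rw [this]
    exact (measurableSet_Ico.union (MeasurableSet.iUnion fun j => measurableSet_Ico).compl)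
  · have : stepIdx lam ⁻¹' {k} = Set.Ico (lowS lam k) (highS lam k) := by
      ext t
      simp only [Set.mem_preimage, Set.mem_singleton_iff, Set.mem_Ico]
      constructor
      · intro h
        by_cases hex : ∃ j : Fin (n+1), lowS lam j ≤ t ∧ t < highS lam j
        · obtain ⟨j, hj⟩ := hex
          have := stepIdx_eq hlam hj.1 hj.2
          rw [h] at this; rw [this]; exact hj
        · exfalso; rw [stepIdx, dif_neg] at h
          · exact hk h.symm
          · exact hex
      · intro ⟨h1, h2⟩; exact stepIdx_eq hlam h1 h2
    rw [this]; exact measurableSet_Ico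

lemma highS_sub_lowS (k : Fin (n + 1)) : highS lam k - lowS lam k = lam k := by
  have hsplit : Finset.univ.filter (fun j => j ≤ k) =
      insert k (Finset.univ.filter (fun j => j < k)) := by
    ext j
    simp only [Finset.mem_filter, Finset.mem_univ, true_and, Finset.mem_insert]
    constructor
    · intro h; rcases eq_or_lt_of_le h with h | h
      · exact Or.inl h
      · exact Or.inr h
    · rintro (rfl | h); · exact le_refl _
      · exact le_of_lt h
  rw [highS, lowS, hsplit, Finset.sum_insert (by simp)]
  ring

lemma lowS_nonneg (hlam : ∀ i, 0 ≤ lam i) (k : Fin (n + 1)) : 0 ≤ lowS lam k :=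
  Finset.sum_nonneg fun i _ => hlam i

lemma highS_le_one (hlam : ∀ i, 0 ≤ lam i) (hsum : ∑ i, lam i = 1) (k : Fin (n + 1)) :
    highS lam k ≤ 1 := by
  rw [← hsum]
  exact Finset.sum_le_sum_of_subset_of_nonneg (Finset.filter_subset _ _) fun i _ _ => hlam i

lemma exists_pos_le_fin {k : ℕ} (g : Fin k → ℝ) (hg : ∀ i, 0 < g i) :
    ∃ ε > 0, ∀ i, ε ≤ g i := by
  cases k with
  | zero => exact ⟨1, one_pos, fun i => i.elim0⟩
  | succ k =>
    refine ⟨Finset.univ.inf' ⟨0, Finset.mem_univ 0⟩ g, ?_,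
      fun i => Finset.inf'_le g (Finset.mem_univ i)⟩
    exact (Finset.lt_inf'_iff _).2 fun i _ => hg i

end Aux


/-- Let `P` be a (metrizable, hence Hausdorff) pospace.  Then the map `κ : |P| → P^Δ`
sending each point of the order complex to the chain spanning the minimal simplex
containing it is continuous, where `|P|` carries the `L_1` (Hartman–Mycielski) metric
topology and `P^Δ` the topology whose open sets are the `Δ`-open sets. -/
theorem stmt18 {P : Type*} [MetricSpace P] [PartialOrder P]
    (hpos : IsClosed {p : P × P | p.1 ≤ p.2})
    {n : ℕ} (c : Fin (n + 1) → P) (hc : StrictMono c)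
    (lam : Fin (n + 1) → ℝ) (hlam : ∀ i, 0 < lam i) (hsum : ∑ i, lam i = 1)
    (U : Set (ChainsOf P)) (hU : IsOpenDelta U)
    (hcU : (⟨n, ⟨c, hc⟩⟩ : ChainsOf P) ∈ U) :
    ∃ δ > (0 : ℝ), ∀ {m : ℕ} (d : Fin (m + 1) → P) (hd : StrictMono d)
      (mu : Fin (m + 1) → ℝ), (∀ j, 0 < mu j) → (∑ j, mu j = 1) →
        L1dist c lam d mu < δ → (⟨m, ⟨d, hd⟩⟩ : ChainsOf P) ∈ U := by
  classical
  obtain ⟨hUopen, hUup⟩ := hU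
  have hlamnn : ∀ i, (0:ℝ) ≤ lam i := fun i => (hlam i).le
  -- openness of the fiber over `n`
  have hopen : IsOpen ((fun x : {c : Fin (n+1) → P // StrictMono c} =>
      (⟨n, x⟩ : ChainsOf P)) ⁻¹' U) := hUopen.preimage continuous_sigmaMk
  obtain ⟨ε1, hε1, hball⟩ := Metric.isOpen_iff.1 hopen ⟨c, hc⟩ hcU
  -- order separation around consecutive entries of `c`
  have hsep : ∀ i : Fin n, ∃ ε > 0, ∀ x y : P,
      dist x (c i.succ) < ε → dist y (c i.castSucc) < ε → ¬ x ≤ y := by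
    intro i
    have hmem : (c i.succ, c i.castSucc) ∈ {p : P × P | p.1 ≤ p.2}ᶜ := by
      simp only [Set.mem_compl_iff, Set.mem_setOf_eq]
      exact not_le_of_gt (hc (Fin.castSucc_lt_succ (i := i)))
    obtain ⟨ε, hε, hb⟩ := Metric.isOpen_iff.1 hpos.isOpen_compl _ hmem
    refine ⟨ε, hε, fun x y h1 h2 hxy => ?_⟩
    have hin : (x, y) ∈ Metric.ball (c i.succ, c i.castSucc) ε := by
      rw [Metric.mem_ball, Prod.dist_eq]; exact max_lt h1 h2
    exact hb hin hxy
  choose eord heordpos heord using hsep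
  obtain ⟨ε2, hε2, hε2le⟩ := exists_pos_le_fin eord heordpos
  set ε : ℝ := min ε1 ε2 with hεdef
  have hε : 0 < ε := lt_min hε1 hε2
  obtain ⟨lmin, hlmin, hlminle⟩ := exists_pos_le_fin lam hlam
  refine ⟨ε * lmin, mul_pos hε hlmin, ?_⟩
  intro m d hd mu hmu hmusum hdist
  have hmunn : ∀ j, (0:ℝ) ≤ mu j := fun j => (hmu j).le
  set f : ℝ → ℝ := fun t => dist (c (stepIdx lam t)) (d (stepIdx mu t)) with hfdef
  have hmeas : Measurable f := by
    have h1 := measurable_stepIdx (lam := lam) hlamnn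
    have h2 := measurable_stepIdx (lam := mu) hmunn
    exact (measurable_of_countable
      (fun p : Fin (n+1) × Fin (m+1) => dist (c p.1) (d p.2))).comp (h1.prodMk h2)
  have hint : MeasureTheory.IntegrableOn f (Set.Ico (0:ℝ) 1) := by
    set B : ℝ := Finset.univ.sup' ⟨((0 : Fin (n+1)), (0 : Fin (m+1))), Finset.mem_univ _⟩
      (fun p : Fin (n+1) × Fin (m+1) => dist (c p.1) (d p.2)) with hBdef
    refine MeasureTheory.Integrable.mono'
      ((MeasureTheory.integrableOn_const_iff (C := B) (hC := by simp)).2 (Or.inr ?_)) hmeas.aestronglyMeasurable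
      (Filter.Eventually.of_forall fun t => ?_)
    · rw [Real.volume_Ico]; exact ENNReal.ofReal_lt_top
    · rw [Real.norm_of_nonneg dist_nonneg]
      exact Finset.le_sup' (fun p : Fin (n+1) × Fin (m+1) => dist (c p.1) (d p.2)) (Finset.mem_univ (stepIdx lam t, stepIdx mu t))
  -- key claim: near each vertex of `c` there is a vertex of `d`
  have hkey : ∀ i : Fin (n+1), ∃ t : ℝ,
      stepIdx lam t = i ∧ dist (c i) (d (stepIdx mu t)) < ε := by
    intro i
    by_contra hcontra
    push_neg at hcontra
    have hIsub : Set.Ico (lowS lam i) (highS lam i) ⊆ Set.Ico (0:ℝ) 1 := by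
      rintro t ⟨h1, h2⟩
      exact ⟨le_trans (lowS_nonneg hlamnn i) h1,
        lt_of_lt_of_le h2 (highS_le_one hlamnn hsum i)⟩
    have hstep : ∀ t ∈ Set.Ico (lowS lam i) (highS lam i), stepIdx lam t = i :=
      fun t ht => stepIdx_eq hlamnn ht.1 ht.2
    have hlb : ∀ t ∈ Set.Ico (lowS lam i) (highS lam i), ε ≤ f t := by
      intro t ht
      show ε ≤ dist (c (stepIdx lam t)) (d (stepIdx mu t))
      rw [hstep t ht]
      exact hcontra t (hstep t ht)
    have h1 : ε * lam i ≤ ∫ t in Set.Ico (lowS lam i) (highS lam i), f t := by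
      have h := MeasureTheory.setIntegral_ge_of_const_le measurableSet_Ico
        (by rw [Real.volume_Ico]; exact ENNReal.ofReal_ne_top) hlb (hint.mono_set hIsub)
      rw [Real.volume_real_Ico, highS_sub_lowS, max_eq_left (hlam i).le, smul_eq_mul] at h; linarith
    have h2 : (∫ t in Set.Ico (lowS lam i) (highS lam i), f t) ≤ ∫ t in Set.Ico (0:ℝ) 1, f t :=
      MeasureTheory.setIntegral_mono_set hint
        (Filter.Eventually.of_forall fun t => dist_nonneg)
        (HasSubset.Subset.eventuallyLE hIsub)
    have h3 : ε * lmin ≤ ε * lam i := by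
      have := hlminle i
      nlinarith
    have h4 : L1dist c lam d mu = ∫ t in Set.Ico (0:ℝ) 1, f t := rfl
    linarith [hdist, h4 ▸ (h3.trans (h1.trans h2))]
  choose tt htt1 htt2 using hkey
  set j : Fin (n+1) → Fin (m+1) := fun i => stepIdx mu (tt i) with hjdef
  set c' : Fin (n+1) → P := fun i => d (j i) with hc'def
  have hclose : ∀ i, dist (c' i) (c i) < ε := fun i => by
    rw [dist_comm]; exact htt2 i
  have hc' : StrictMono c' := by
    rw [Fin.strictMono_iff_lt_succ]
    intro i
    have hεe : ε ≤ eord i := le_trans (min_le_right _ _) (hε2le i)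
    have hx : dist (c' i.succ) (c i.succ) < eord i := lt_of_lt_of_le (hclose _) hεe
    have hy : dist (c' i.castSucc) (c i.castSucc) < eord i := lt_of_lt_of_le (hclose _) hεe
    have hnle : ¬ c' i.succ ≤ c' i.castSucc := heord i _ _ hx hy
    rcases le_total (j i.succ) (j i.castSucc) with h | h
    · exact absurd (hd.monotone h) hnle
    · rcases eq_or_lt_of_le (hd.monotone h) with heq | hlt2
      · exact absurd heq.ge hnle
      · exact hlt2
  have hmem : (⟨n, ⟨c', hc'⟩⟩ : ChainsOf P) ∈ U := by
    apply hball
    rw [Metric.mem_ball, Subtype.dist_eq]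
    exact (dist_pi_lt_iff hε1).2 fun i =>
      lt_of_lt_of_le (hclose i) (min_le_left _ _)
  exact hUup _ hmem ⟨m, ⟨d, hd⟩⟩ (by rintro x ⟨i, rfl⟩; exact ⟨j i, rfl⟩)
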